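/- Suppose Assumption (Bayes boundary) holds, φ : ℝ → ℝ is strictly concave, strictly increasing, and differentiable at 0 with φ'(0) > 0, E[sup_{b∈B}(|φ(X·b)| + |φ(−X·b)|)] < ∞, B = {b ∈ ℝ^d : ‖b‖ ≤ R} for some R ∈ (0,∞), and for every nonzero v ∈ ℝ^d, P(X·v ≠ 0) > 0. Then there exists a unique maximizer b_φ of Q_φ over B. If in addition (T1) for any b₁, b₂ ∈ B that are not parallel, P(1{X·b₁ ≥ 0} ≠ 1{X·b₂ ≥ 0}) > 0, and (T2) 1{X·b_φ ≥ 0} = 1{η(X) ≥ 1/2} almost surely, then there exists a scalar c > 0 such that b_φ = c·b₀, and b_φ is a maximizer of the maximum score objective Q₀ over B. -/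

import Mathlib

open MeasureTheory
open scoped RealInnerProductSpace

/-- The maximum score objective `Q₀(b) = E[Y·1{X·b ≥ 0} + (1−Y)·1{X·b < 0}]`. -/
noncomputable def Q0 {Ω : Type*} [MeasurableSpace Ω] (P : Measure Ω) {d : ℕ}
    (X : Ω → EuclideanSpace ℝ (Fin d)) (Y : Ω → ℝ)
    (b : EuclideanSpace ℝ (Fin d)) : ℝ :=
  ∫ ω, (Y ω * (if 0 ≤ ⟪X ω, b⟫ then (1 : ℝ) else 0)
      + (1 - Y ω) * (if ⟪X ω, b⟫ < 0 then (1 : ℝ) else 0)) ∂P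

/-- The surrogate objective `Q_φ(b) = E[Y·φ(X·b) + (1−Y)·φ(−X·b)]`. -/
noncomputable def Qphi {Ω : Type*} [MeasurableSpace Ω] (P : Measure Ω) {d : ℕ}
    (X : Ω → EuclideanSpace ℝ (Fin d)) (Y : Ω → ℝ) (φ : ℝ → ℝ)
    (b : EuclideanSpace ℝ (Fin d)) : ℝ :=
  ∫ ω, (Y ω * φ (⟪X ω, b⟫) + (1 - Y ω) * φ (-⟪X ω, b⟫)) ∂P

/-- Two vectors are parallel if one is a scalar multiple of the other. -/
def Parallel {d : ℕ} (b₁ b₂ : EuclideanSpace ℝ (Fin d)) : Prop :=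
  (∃ c : ℝ, b₁ = c • b₂) ∨ (∃ c : ℝ, b₂ = c • b₁)

theorem main_identification_theorem
    {Ω : Type*} [MeasurableSpace Ω] (P : Measure Ω) [IsProbabilityMeasure P]
    {d : ℕ} (X : Ω → EuclideanSpace ℝ (Fin d)) (Y : Ω → ℝ)
    (η : EuclideanSpace ℝ (Fin d) → ℝ)
    (hX : Measurable X) (hY : Measurable Y) (hY01 : ∀ ω, Y ω = 0 ∨ Y ω = 1)
    (hη : Measurable η) (hη01 : ∀ x, η x ∈ Set.Icc (0 : ℝ) 1)
    (hcond : ∀ g : EuclideanSpace ℝ (Fin d) → ℝ, Measurable g → (∃ C, ∀ x, |g x| ≤ C) →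
      ∫ ω, Y ω * g (X ω) ∂P = ∫ ω, η (X ω) * g (X ω) ∂P)
    (B : Set (EuclideanSpace ℝ (Fin d))) (hBne : B.Nonempty) (hBcpt : IsCompact B)
    (b₀ : EuclideanSpace ℝ (Fin d)) (hb₀B : b₀ ∈ B)
    -- Assumption (Bayes boundary)
    (hBayes₁ : ∀ᵐ ω ∂P, ((1 : ℝ) / 2 ≤ η (X ω) ↔ 0 ≤ ⟪X ω, b₀⟫))
    (hBayes₂ : 0 < P {ω | 0 < ⟪X ω, b₀⟫}) (hBayes₂' : 0 < P {ω | ⟪X ω, b₀⟫ < 0})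
    -- Assumption (surrogate score function)
    (φ : ℝ → ℝ) (hφconc : StrictConcaveOn ℝ Set.univ φ) (hφmono : StrictMono φ)
    (hφdiff : DifferentiableAt ℝ φ 0) (hφderiv : 0 < deriv φ 0)
    -- regularity conditions
    (henv : Integrable (fun ω => ⨆ b ∈ B, (|φ (⟪X ω, b⟫)| + |φ (-⟪X ω, b⟫)|)) P)
    (R : ℝ) (hR : 0 < R) (hBball : B = Metric.closedBall (0 : EuclideanSpace ℝ (Fin d)) R)
    (hndeg : ∀ v : EuclideanSpace ℝ (Fin d), v ≠ 0 → 0 < P {ω | ⟪X ω, v⟫ ≠ 0}) :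
    (∃! bφ, bφ ∈ B ∧ ∀ b ∈ B, Qphi P X Y φ b ≤ Qphi P X Y φ bφ) ∧
    (∀ bφ ∈ B, (∀ b ∈ B, Qphi P X Y φ b ≤ Qphi P X Y φ bφ) →
      -- (T1)
      (∀ b₁ ∈ B, ∀ b₂ ∈ B, ¬ Parallel b₁ b₂ →
        0 < P {ω | ¬ ((0 ≤ ⟪X ω, b₁⟫) ↔ (0 ≤ ⟪X ω, b₂⟫))}) →
      -- (T2)
      (∀ᵐ ω ∂P, ((0 ≤ ⟪X ω, bφ⟫) ↔ ((1 : ℝ) / 2 ≤ η (X ω)))) →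
      (∃ c : ℝ, 0 < c ∧ bφ = c • b₀) ∧ (∀ b ∈ B, Q0 P X Y b ≤ Q0 P X Y bφ)) := by
  classical
  have hφcont : Continuous φ := by
    rw [← continuousOn_univ]
    exact hφconc.concaveOn.continuousOn isOpen_univ
  set F : EuclideanSpace ℝ (Fin d) → Ω → ℝ :=
    fun b ω => Y ω * φ (⟪X ω, b⟫) + (1 - Y ω) * φ (-⟪X ω, b⟫) with hFdef
  have hQ : ∀ b, Qphi P X Y φ b = ∫ ω, F b ω ∂P := fun _ => rfl
  set env : Ω → ℝ := fun ω => ⨆ b ∈ B, (|φ (⟪X ω, b⟫)| + |φ (-⟪X ω, b⟫)|) with henvdef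
  have hinner : ∀ b : EuclideanSpace ℝ (Fin d), Measurable fun ω => (⟪X ω, b⟫ : ℝ) :=
    fun b => hX.inner measurable_const
  have hFmeas : ∀ b, Measurable (F b) := by
    intro b
    exact (hY.mul (hφcont.measurable.comp (hinner b))).add
      ((measurable_const.sub hY).mul (hφcont.measurable.comp (hinner b).neg))
  -- the envelope dominates
  have hcontf : ∀ ω, Continuous fun b : EuclideanSpace ℝ (Fin d) =>
      |φ (⟪X ω, b⟫)| + |φ (-⟪X ω, b⟫)| := by
    intro ω
    have h1 : Continuous fun b : EuclideanSpace ℝ (Fin d) => (⟪X ω, b⟫ : ℝ) :=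
      continuous_const.inner continuous_id
    exact ((hφcont.comp h1).abs).add ((hφcont.comp h1.neg).abs)
  have hfle : ∀ ω, ∀ b ∈ B, |φ (⟪X ω, b⟫)| + |φ (-⟪X ω, b⟫)| ≤ env ω := by
    intro ω b hb
    obtain ⟨M, hM⟩ := hBcpt.bddAbove_image (hcontf ω).continuousOn
    have hbdd : BddAbove (Set.range fun b' : EuclideanSpace ℝ (Fin d) =>
        ⨆ _ : b' ∈ B, (|φ (⟪X ω, b'⟫)| + |φ (-⟪X ω, b'⟫)|)) := by
      refine ⟨max M 0, ?_⟩
      rintro x ⟨b', rfl⟩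
      beta_reduce
      by_cases hb' : b' ∈ B
      · rw [ciSup_pos hb']
        exact le_max_of_le_left (hM (Set.mem_image_of_mem _ hb'))
      · haveI : IsEmpty (b' ∈ B) := ⟨hb'⟩
        rw [iSup_of_empty', Real.sSup_empty]
        exact le_max_right _ _
    have h0 : (⨆ _ : b ∈ B, (|φ (⟪X ω, b⟫)| + |φ (-⟪X ω, b⟫)|)) ≤ env ω := le_ciSup hbdd b
    rwa [ciSup_pos hb] at h0
  have hFbound' : ∀ b ∈ B, ∀ ω, ‖F b ω‖ ≤ env ω := by
    intro b hb ω
    have h1 : |F b ω| ≤ |φ (⟪X ω, b⟫)| + |φ (-⟪X ω, b⟫)| := by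
      rcases hY01 ω with h | h
      · have : F b ω = φ (-⟪X ω, b⟫) := by simp [hFdef, h]
        rw [this]
        exact le_add_of_nonneg_left (abs_nonneg _)
      · have : F b ω = φ (⟪X ω, b⟫) := by simp [hFdef, h]
        rw [this]
        exact le_add_of_nonneg_right (abs_nonneg _)
    calc ‖F b ω‖ = |F b ω| := rfl
      _ ≤ |φ (⟪X ω, b⟫)| + |φ (-⟪X ω, b⟫)| := h1
      _ ≤ env ω := hfle ω b hb
  have hFbound : ∀ b ∈ B, ∀ ω, ‖F b ω‖ ≤ ‖env ω‖ := fun b hb ω =>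
    (hFbound' b hb ω).trans (le_abs_self _)
  have hFint : ∀ b ∈ B, Integrable (F b) P := fun b hb =>
    henv.mono (hFmeas b).aestronglyMeasurable (Filter.Eventually.of_forall (hFbound b hb))
  -- continuity of Qphi on B
  have hQcont : ContinuousOn (Qphi P X Y φ) B := by
    intro b hb
    have key : Filter.Tendsto (fun b' => ∫ ω, F b' ω ∂P) (nhdsWithin b B) (nhds (∫ ω, F b ω ∂P)) := by
      apply tendsto_integral_filter_of_dominated_convergence env
      · exact Filter.Eventually.of_forall fun b' => (hFmeas b').aestronglyMeasurable
      · filter_upwards [self_mem_nhdsWithin] with b' hb'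
        exact Filter.Eventually.of_forall fun ω => hFbound' b' hb' ω
      · exact henv
      · refine Filter.Eventually.of_forall fun ω => ?_
        have hc : Continuous fun b' : EuclideanSpace ℝ (Fin d) => F b' ω := by
          have h1 : Continuous fun b' : EuclideanSpace ℝ (Fin d) => (⟪X ω, b'⟫ : ℝ) :=
            continuous_const.inner continuous_id
          exact (continuous_const.mul (hφcont.comp h1)).add
            (continuous_const.mul (hφcont.comp h1.neg))
        exact (hc.tendsto b).mono_left nhdsWithin_le_nhds
    have : Filter.Tendsto (Qphi P X Y φ) (nhdsWithin b B) (nhds (Qphi P X Y φ b)) := by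
      exact key
    exact this
  obtain ⟨bφ, hbφB, hbφmax⟩ := hBcpt.exists_isMaxOn hBne hQcont
  have hBconv : Convex ℝ B := hBball ▸ convex_closedBall _ _
  have hmidB : ∀ b₁ ∈ B, ∀ b₂ ∈ B, ((1/2 : ℝ) • b₁ + (1/2 : ℝ) • b₂) ∈ B := fun b₁ h₁ b₂ h₂ =>
    hBconv h₁ h₂ (by norm_num) (by norm_num) (by norm_num)
  -- strict midpoint inequality
  have hc1 : ∀ a b : ℝ, (1/2:ℝ) * φ a + (1/2:ℝ) * φ b ≤ φ ((1/2:ℝ)*a + (1/2:ℝ)*b) := by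
    intro a b
    rcases eq_or_ne a b with rfl | hab
    · have h : (1/2:ℝ)*a + (1/2:ℝ)*a = a := by ring
      rw [h]; linarith
    · have := hφconc.2 (Set.mem_univ a) (Set.mem_univ b) hab one_half_pos one_half_pos
        (by norm_num)
      simpa [smul_eq_mul] using this.le
  have hc1' : ∀ a b : ℝ, a ≠ b → (1/2:ℝ) * φ a + (1/2:ℝ) * φ b < φ ((1/2:ℝ)*a + (1/2:ℝ)*b) := by
    intro a b hab
    have := hφconc.2 (Set.mem_univ a) (Set.mem_univ b) hab one_half_pos one_half_pos (by norm_num)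
    simpa [smul_eq_mul] using this
  have hmid : ∀ b₁ ∈ B, ∀ b₂ ∈ B, b₁ ≠ b₂ →
      (Qphi P X Y φ b₁ + Qphi P X Y φ b₂) / 2 <
        Qphi P X Y φ ((1/2 : ℝ) • b₁ + (1/2 : ℝ) • b₂) := by
    intro b₁ h₁ b₂ h₂ hne
    set m := (1/2 : ℝ) • b₁ + (1/2 : ℝ) • b₂ with hm
    have hip : ∀ ω, (⟪X ω, m⟫ : ℝ) = (1/2:ℝ) * ⟪X ω, b₁⟫ + (1/2:ℝ) * ⟪X ω, b₂⟫ := by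
      intro ω
      rw [hm, inner_add_right, real_inner_smul_right, real_inner_smul_right]
    have hle : ∀ ω, (F b₁ ω + F b₂ ω)/2 ≤ F m ω := by
      intro ω
      have e2 : -(⟪X ω, m⟫ : ℝ) = (1/2:ℝ) * (-⟪X ω, b₁⟫) + (1/2:ℝ) * (-⟪X ω, b₂⟫) := by
        rw [hip]; ring
      rcases hY01 ω with h | h
      · have f1 : F b₁ ω = φ (-⟪X ω, b₁⟫) := by simp [hFdef, h]
        have f2 : F b₂ ω = φ (-⟪X ω, b₂⟫) := by simp [hFdef, h]
        have fm : F m ω = φ (-⟪X ω, m⟫) := by simp [hFdef, h]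
        rw [f1, f2, fm, e2]
        linarith [hc1 (-⟪X ω, b₁⟫) (-⟪X ω, b₂⟫)]
      · have f1 : F b₁ ω = φ (⟪X ω, b₁⟫) := by simp [hFdef, h]
        have f2 : F b₂ ω = φ (⟪X ω, b₂⟫) := by simp [hFdef, h]
        have fm : F m ω = φ (⟪X ω, m⟫) := by simp [hFdef, h]
        rw [f1, f2, fm, hip]
        linarith [hc1 (⟪X ω, b₁⟫) (⟪X ω, b₂⟫)]
    have hlt : ∀ ω, (⟪X ω, b₁⟫ : ℝ) ≠ ⟪X ω, b₂⟫ → (F b₁ ω + F b₂ ω)/2 < F m ω := by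
      intro ω hne'
      have e2 : -(⟪X ω, m⟫ : ℝ) = (1/2:ℝ) * (-⟪X ω, b₁⟫) + (1/2:ℝ) * (-⟪X ω, b₂⟫) := by
        rw [hip]; ring
      rcases hY01 ω with h | h
      · have f1 : F b₁ ω = φ (-⟪X ω, b₁⟫) := by simp [hFdef, h]
        have f2 : F b₂ ω = φ (-⟪X ω, b₂⟫) := by simp [hFdef, h]
        have fm : F m ω = φ (-⟪X ω, m⟫) := by simp [hFdef, h]
        rw [f1, f2, fm, e2]
        have : (-⟪X ω, b₁⟫ : ℝ) ≠ -⟪X ω, b₂⟫ := fun hc => hne' (neg_injective hc)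
        linarith [hc1' (-⟪X ω, b₁⟫) (-⟪X ω, b₂⟫) this]
      · have f1 : F b₁ ω = φ (⟪X ω, b₁⟫) := by simp [hFdef, h]
        have f2 : F b₂ ω = φ (⟪X ω, b₂⟫) := by simp [hFdef, h]
        have fm : F m ω = φ (⟪X ω, m⟫) := by simp [hFdef, h]
        rw [f1, f2, fm, hip]
        linarith [hc1' (⟪X ω, b₁⟫) (⟪X ω, b₂⟫) hne']
    have hmB : m ∈ B := hmidB b₁ h₁ b₂ h₂
    have hint₁ := hFint b₁ h₁
    have hint₂ := hFint b₂ h₂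
    have hintm := hFint m hmB
    have hg : Integrable (fun ω => (F b₁ ω + F b₂ ω)/2) P := (hint₁.add hint₂).div_const 2
    have hdint : Integrable (fun ω => F m ω - (F b₁ ω + F b₂ ω)/2) P := hintm.sub hg
    have hnn : (0 : Ω → ℝ) ≤ fun ω => F m ω - (F b₁ ω + F b₂ ω)/2 := fun ω =>
      sub_nonneg.2 (hle ω)
    have hpos : 0 < ∫ ω, (F m ω - (F b₁ ω + F b₂ ω)/2) ∂P := by
      rcases lt_or_eq_of_le (integral_nonneg hnn) with h | h
      · exact h
      · exfalso
        have hae := (integral_eq_zero_iff_of_nonneg hnn hdint).mp h.symm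
        have hnull : P {ω | ¬ (F m ω - (F b₁ ω + F b₂ ω)/2 = 0)} = 0 := by
          have h2 : ∀ᵐ ω ∂P, F m ω - (F b₁ ω + F b₂ ω)/2 = 0 := by
            filter_upwards [hae] with ω hω
            simpa using hω
          exact ae_iff.mp h2
        have hsub : {ω | (⟪X ω, b₁ - b₂⟫ : ℝ) ≠ 0} ⊆
            {ω | ¬ (F m ω - (F b₁ ω + F b₂ ω)/2 = 0)} := by
          intro ω hω
          simp only [Set.mem_setOf_eq] at hω ⊢
          have hne' : (⟪X ω, b₁⟫ : ℝ) ≠ ⟪X ω, b₂⟫ := by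
            intro hc
            apply hω
            rw [inner_sub_right, hc, sub_self]
          have := hlt ω hne'
          intro hc
          rw [sub_eq_zero] at hc
          exact absurd hc.symm (ne_of_lt this)
        have := measure_mono_null hsub hnull
        exact absurd this (ne_of_gt (hndeg (b₁ - b₂) (sub_ne_zero.2 hne)))
    have hsplit : ∫ ω, (F m ω - (F b₁ ω + F b₂ ω)/2) ∂P
        = (∫ ω, F m ω ∂P) - ((∫ ω, F b₁ ω ∂P) + (∫ ω, F b₂ ω ∂P))/2 := by
      rw [integral_sub hintm hg]
      congr 1
      rw [integral_div, integral_add hint₁ hint₂]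
    rw [hQ, hQ, hQ]
    rw [hsplit] at hpos
    linarith
  have huniq : ∀ m₁ ∈ B, ∀ m₂ ∈ B, (∀ b ∈ B, Qphi P X Y φ b ≤ Qphi P X Y φ m₁) →
      (∀ b ∈ B, Qphi P X Y φ b ≤ Qphi P X Y φ m₂) → m₁ = m₂ := by
    intro m₁ h₁ m₂ h₂ hm₁ hm₂
    by_contra hne
    have hmB := hmidB m₁ h₁ m₂ h₂
    have h3 := hmid m₁ h₁ m₂ h₂ hne
    have h4 := hm₁ _ hmB
    have h5 := hm₁ m₂ h₂
    have h6 := hm₂ m₁ h₁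
    linarith
  constructor
  · exact ⟨bφ, ⟨hbφB, fun b hb => hbφmax hb⟩,
      fun y hy => huniq y hy.1 bφ hbφB hy.2 (fun b hb => hbφmax hb)⟩
  · -- Part 2
    intro bψ hbψB hbψmax hT1 hT2
    have hEq : ∀ᵐ ω ∂P, ((0 ≤ ⟪X ω, bψ⟫) ↔ (0 ≤ ⟪X ω, b₀⟫)) := by
      filter_upwards [hT2, hBayes₁] with ω h1 h2
      exact h1.trans h2
    have hEqnull : P {ω | ¬ ((0 ≤ ⟪X ω, bψ⟫) ↔ (0 ≤ ⟪X ω, b₀⟫))} = 0 := ae_iff.mp hEq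
    have hpar : Parallel bψ b₀ := by
      by_contra hnp
      have := hT1 bψ hbψB b₀ hb₀B hnp
      rw [hEqnull] at this
      exact lt_irrefl 0 this
    have hb₀ne : b₀ ≠ 0 := by
      intro h
      rw [h] at hBayes₂'
      have : {ω | (⟪X ω, (0 : EuclideanSpace ℝ (Fin d))⟫ : ℝ) < 0} = ∅ := by
        ext ω; simp [inner_zero_right]
      rw [this, measure_empty] at hBayes₂'
      exact lt_irrefl 0 hBayes₂'
    have hbψne : bψ ≠ 0 := by
      intro h
      have hae : ∀ᵐ ω ∂P, 0 ≤ (⟪X ω, b₀⟫ : ℝ) := by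
        filter_upwards [hEq] with ω hω
        apply hω.mp
        rw [h, inner_zero_right]
      have h2 := ae_iff.mp hae
      have h3 : {ω | (⟪X ω, b₀⟫ : ℝ) < 0} = {ω | ¬ (0 ≤ (⟪X ω, b₀⟫ : ℝ))} := by
        ext ω; simp [not_le]
      rw [h3, h2] at hBayes₂'
      exact lt_irrefl 0 hBayes₂'
    obtain ⟨c, hcne, hbψ⟩ : ∃ c : ℝ, c ≠ 0 ∧ bψ = c • b₀ := by
      rcases hpar with ⟨c, hc⟩ | ⟨c, hc⟩
      · refine ⟨c, ?_, hc⟩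
        intro h0
        rw [h0, zero_smul] at hc
        exact hbψne hc
      · have hc0 : c ≠ 0 := by
          intro h0
          rw [h0, zero_smul] at hc
          exact hb₀ne hc
        refine ⟨c⁻¹, inv_ne_zero hc0, ?_⟩
        rw [hc, smul_smul, inv_mul_cancel₀ hc0, one_smul]
    have hcpos : 0 < c := by
      rcases hcne.lt_or_gt with hlt | hpos
      · exfalso
        have hsub : {ω | 0 < (⟪X ω, b₀⟫ : ℝ)} ⊆
            {ω | ¬ ((0 ≤ ⟪X ω, bψ⟫) ↔ (0 ≤ ⟪X ω, b₀⟫))} := by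
          intro ω hω
          simp only [Set.mem_setOf_eq] at hω ⊢
          intro hiff
          have h1 : (⟪X ω, bψ⟫ : ℝ) = c * ⟪X ω, b₀⟫ := by
            rw [hbψ, real_inner_smul_right]
          have h2 : (⟪X ω, bψ⟫ : ℝ) < 0 := by
            rw [h1]; exact mul_neg_of_neg_of_pos hlt hω
          exact absurd (hiff.mpr hω.le) (not_le.mpr h2)
        have := measure_mono_null hsub hEqnull
        rw [this] at hBayes₂
        exact lt_irrefl 0 hBayes₂
      · exact hpos
    refine ⟨⟨c, hcpos, hbψ⟩, ?_⟩
    -- Q0 optimality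
    have hbint : ∀ f : Ω → ℝ, Measurable f → ∀ C : ℝ, (∀ ω, |f ω| ≤ C) → Integrable f P := by
      intro f hf C hC
      exact (integrable_const C).mono' hf.aestronglyMeasurable (Filter.Eventually.of_forall hC)
    have hY1 : ∀ ω, |Y ω| ≤ 1 := by
      intro ω; rcases hY01 ω with h | h <;> simp [h]
    have hrep : ∀ b : EuclideanSpace ℝ (Fin d), Q0 P X Y b =
        ∫ ω, (η (X ω) * (if 0 ≤ ⟪X ω, b⟫ then (1:ℝ) else 0)
          + (1 - η (X ω)) * (if ⟪X ω, b⟫ < 0 then (1:ℝ) else 0)) ∂P := by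
      intro b
      set G : EuclideanSpace ℝ (Fin d) → ℝ := fun x => if 0 ≤ ⟪x, b⟫ then (1:ℝ) else 0 with hGdef
      set H : EuclideanSpace ℝ (Fin d) → ℝ := fun x => if ⟪x, b⟫ < 0 then (1:ℝ) else 0 with hHdef
      have hGmeas : Measurable G :=
        Measurable.ite (measurableSet_le measurable_const (measurable_id.inner measurable_const))
          measurable_const measurable_const
      have hHmeas : Measurable H :=
        Measurable.ite (measurableSet_lt (measurable_id.inner measurable_const) measurable_const)
          measurable_const measurable_const
      have hG1 : ∀ x, |G x| ≤ 1 := by intro x; simp only [hGdef]; split_ifs <;> simp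
      have hH1 : ∀ x, |H x| ≤ 1 := by intro x; simp only [hHdef]; split_ifs <;> simp
      have habs : ∀ (u v : ℝ), |u| ≤ 1 → |v| ≤ 1 → |u * v| ≤ 1 := by
        intro u v hu hv
        rw [abs_mul]
        calc |u| * |v| ≤ 1 * 1 := mul_le_mul hu hv (abs_nonneg _) zero_le_one
          _ = 1 := one_mul 1
      have hη1 : ∀ x, |η x| ≤ 1 := by
        intro x
        obtain ⟨h0, h1⟩ := hη01 x
        rw [abs_le]; constructor <;> linarith
      have hη1' : ∀ x, |1 - η x| ≤ 1 := by
        intro x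
        obtain ⟨h0, h1⟩ := hη01 x
        rw [abs_le]; constructor <;> linarith
      have iYG : Integrable (fun ω => Y ω * G (X ω)) P :=
        hbint _ (hY.mul (hGmeas.comp hX)) 1 (fun ω => habs _ _ (hY1 ω) (hG1 (X ω)))
      have iYH : Integrable (fun ω => Y ω * H (X ω)) P :=
        hbint _ (hY.mul (hHmeas.comp hX)) 1 (fun ω => habs _ _ (hY1 ω) (hH1 (X ω)))
      have iH : Integrable (fun ω => H (X ω)) P :=
        hbint _ (hHmeas.comp hX) 1 (fun ω => hH1 (X ω))
      have h1Y : ∀ ω, |1 - Y ω| ≤ 1 := by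
        intro ω; rcases hY01 ω with h | h <;> simp [h]
      have i1YH : Integrable (fun ω => (1 - Y ω) * H (X ω)) P :=
        hbint _ ((measurable_const.sub hY).mul (hHmeas.comp hX)) 1
          (fun ω => habs _ _ (h1Y ω) (hH1 (X ω)))
      have iηG : Integrable (fun ω => η (X ω) * G (X ω)) P :=
        hbint _ ((hη.comp hX).mul (hGmeas.comp hX)) 1
          (fun ω => habs _ _ (hη1 (X ω)) (hG1 (X ω)))
      have iηH : Integrable (fun ω => η (X ω) * H (X ω)) P :=
        hbint _ ((hη.comp hX).mul (hHmeas.comp hX)) 1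
          (fun ω => habs _ _ (hη1 (X ω)) (hH1 (X ω)))
      have i1ηH : Integrable (fun ω => (1 - η (X ω)) * H (X ω)) P :=
        hbint _ ((measurable_const.sub (hη.comp hX)).mul (hHmeas.comp hX)) 1
          (fun ω => habs _ _ (hη1' (X ω)) (hH1 (X ω)))
      have e0 : Q0 P X Y b = ∫ ω, (Y ω * G (X ω) + (1 - Y ω) * H (X ω)) ∂P := rfl
      have e1 : Q0 P X Y b = (∫ ω, Y ω * G (X ω) ∂P) + ∫ ω, (1 - Y ω) * H (X ω) ∂P := by
        rw [e0, ← integral_add iYG i1YH]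
      have e2 : ∫ ω, Y ω * G (X ω) ∂P = ∫ ω, η (X ω) * G (X ω) ∂P :=
        hcond G hGmeas ⟨1, hG1⟩
      have e3 : ∫ ω, (1 - Y ω) * H (X ω) ∂P = ∫ ω, (1 - η (X ω)) * H (X ω) ∂P := by
        have l1 : ∫ ω, (1 - Y ω) * H (X ω) ∂P
            = (∫ ω, H (X ω) ∂P) - ∫ ω, Y ω * H (X ω) ∂P := by
          rw [← integral_sub iH iYH]
          congr 1; funext ω; ring
        have l2 : ∫ ω, (1 - η (X ω)) * H (X ω) ∂P
            = (∫ ω, H (X ω) ∂P) - ∫ ω, η (X ω) * H (X ω) ∂P := by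
          rw [← integral_sub iH iηH]
          congr 1; funext ω; ring
        rw [l1, l2, hcond H hHmeas ⟨1, hH1⟩]
      rw [e1, e2, e3, ← integral_add iηG i1ηH]
    -- integrability of the η-representation integrand
    have hrint : ∀ b : EuclideanSpace ℝ (Fin d),
        Integrable (fun ω => η (X ω) * (if 0 ≤ ⟪X ω, b⟫ then (1:ℝ) else 0)
          + (1 - η (X ω)) * (if ⟪X ω, b⟫ < 0 then (1:ℝ) else 0)) P := by
      intro b
      apply hbint _ ?_ 2 ?_
      · exact ((hη.comp hX).mul (Measurable.ite
            (measurableSet_le measurable_const (hinner b)) measurable_const measurable_const)).add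
          ((measurable_const.sub (hη.comp hX)).mul (Measurable.ite
            (measurableSet_lt (hinner b) measurable_const) measurable_const measurable_const))
      · intro ω
        obtain ⟨h0, h1⟩ := hη01 (X ω)
        rw [abs_le]
        constructor <;> split_ifs <;> linarith
    have hmono : ∀ b ∈ B, Q0 P X Y b ≤ Q0 P X Y b₀ := by
      intro b _
      rw [hrep b, hrep b₀]
      apply integral_mono_ae (hrint b) (hrint b₀)
      filter_upwards [hBayes₁] with ω hω
      obtain ⟨h0, h1⟩ := hη01 (X ω)
      by_cases hb0 : 0 ≤ (⟪X ω, b₀⟫ : ℝ)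
      · have hhalf : 1/2 ≤ η (X ω) := hω.mpr hb0
        rw [if_pos hb0, if_neg (not_lt.mpr hb0)]
        split_ifs <;> linarith
      · have hhalf : η (X ω) < 1/2 := by
          by_contra hc
          exact hb0 (hω.mp (not_lt.mp hc))
        rw [if_neg hb0, if_pos (not_le.mp hb0)]
        split_ifs <;> linarith
    have heq : Q0 P X Y bψ = Q0 P X Y b₀ := by
      simp only [Q0]
      congr 1
      funext ω
      have h1 : (⟪X ω, bψ⟫ : ℝ) = c * ⟪X ω, b₀⟫ := by rw [hbψ, real_inner_smul_right]
      have h2 : (0 ≤ (⟪X ω, bψ⟫ : ℝ)) ↔ (0 ≤ (⟪X ω, b₀⟫ : ℝ)) := by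
        rw [h1]; exact mul_nonneg_iff_of_pos_left hcpos
      have h3 : ((⟪X ω, bψ⟫ : ℝ) < 0) ↔ ((⟪X ω, b₀⟫ : ℝ) < 0) := by
        rw [h1]
        constructor
        · intro h; by_contra hc; push_neg at hc
          exact absurd (mul_nonneg hcpos.le hc) (not_le.mpr h)
        · intro h; exact mul_neg_of_pos_of_neg hcpos h
      rw [if_congr h2 rfl rfl, if_congr h3 rfl rfl]
    intro b hb
    rw [heq]
    exact hmono b hb
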